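/- Let (X, μ) be a σ-finite measure space and let φ: ℝ → ℝ be convex. Let f_n, f ∈ L¹(μ) and h ∈ L¹(μ), and suppose φ∘f_n ∈ L¹(μ) for every n. Assume that for every g ∈ L^∞(μ): ∫_X f_n g dμ → ∫_X f g dμ and ∫_X φ(f_n) g dμ → ∫_X h g dμ as n → ∞. Then φ(f(x)) ≤ h(x) for μ-almost every x ∈ X. -/

import Mathlib

open MeasureTheory Filter

/-- generalized slope monotonicity for convex functions on ℝ -/
private lemma slope_mono_gen {φ : ℝ → ℝ} (hφ : ConvexOn ℝ Set.univ φ)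
    {a b c d : ℝ} (hab : a < b) (hcd : c < d) (hac : a ≤ c) (hbd : b ≤ d) :
    (φ b - φ a) / (b - a) ≤ (φ d - φ c) / (d - c) := by
  have h1 : (φ b - φ a) / (b - a) ≤ (φ d - φ a) / (d - a) :=
    hφ.secant_mono (Set.mem_univ a) (Set.mem_univ b) (Set.mem_univ d)
      hab.ne' (lt_of_lt_of_le hab hbd).ne' hbd
  have h2 : (φ a - φ d) / (a - d) ≤ (φ c - φ d) / (c - d) :=
    hφ.secant_mono (Set.mem_univ d) (Set.mem_univ a) (Set.mem_univ c)
      (lt_of_lt_of_le hab hbd).ne (hcd.ne) hac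
  have e1 : (φ a - φ d) / (a - d) = (φ d - φ a) / (d - a) := by
    rw [← neg_div_neg_eq]; ring_nf
  have e2 : (φ c - φ d) / (c - d) = (φ d - φ c) / (d - c) := by
    rw [← neg_div_neg_eq]; ring_nf
  rw [e1, e2] at h2
  linarith

private lemma exists_subgradient {φ : ℝ → ℝ} (hφ : ConvexOn ℝ Set.univ φ) (t : ℝ) :
    ∃ c : ℝ, (∀ s, φ t + c * (s - t) ≤ φ s) ∧
      (φ t - φ (t - 1)) / (t - (t - 1)) ≤ c ∧ c ≤ (φ (t + 1) - φ t) / (t + 1 - t) := by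
  set S : Set ℝ := (fun v => (φ v - φ t) / (v - t)) '' Set.Ioi t with hS
  have hne : S.Nonempty := ⟨_, ⟨t + 1, by simp, rfl⟩⟩
  have hlb : ∀ y ∈ S, (φ t - φ (t - 1)) / (t - (t - 1)) ≤ y := by
    rintro y ⟨v, hv, rfl⟩
    exact slope_mono_gen hφ (by linarith) (Set.mem_Ioi.mp hv) (by linarith) (le_of_lt hv)
  have hbdd : BddBelow S := ⟨_, hlb⟩
  refine ⟨sInf S, ?_, le_csInf hne hlb, csInf_le hbdd ⟨t + 1, by simp, rfl⟩⟩
  intro s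
  rcases lt_trichotomy s t with hst | rfl | hst
  · -- s < t : slope(s,t) ≤ every slope(t,v), so slope(s,t) ≤ sInf S
    have h1 : (φ t - φ s) / (t - s) ≤ sInf S := by
      apply le_csInf hne
      rintro y ⟨v, hv, rfl⟩
      exact slope_mono_gen hφ hst (Set.mem_Ioi.mp hv) (le_of_lt hst) (le_of_lt (Set.mem_Ioi.mp hv))
    have ht : 0 < t - s := by linarith
    rw [div_le_iff₀ ht] at h1
    nlinarith
  · simp
  · have h1 : sInf S ≤ (φ s - φ t) / (s - t) := csInf_le hbdd ⟨s, hst, rfl⟩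
    have ht : 0 < s - t := by linarith
    rw [le_div_iff₀ ht] at h1
    nlinarith

private lemma ae_affine_le
    {X : Type*} [MeasurableSpace X] (μ : Measure X) [SigmaFinite μ]
    {φ : ℝ → ℝ} {f : ℕ → X → ℝ} {flim h : X → ℝ}
    (hf : ∀ n, Integrable (f n) μ) (hflim : Integrable flim μ) (hh : Integrable h μ)
    (hφf : ∀ n, Integrable (fun x => φ (f n x)) μ)
    (hweak : ∀ g : X → ℝ, Measurable g → (∃ M : ℝ, ∀ x, |g x| ≤ M) →
      Tendsto (fun n => ∫ x, f n x * g x ∂μ) atTop (nhds (∫ x, flim x * g x ∂μ)))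
    (hweakφ : ∀ g : X → ℝ, Measurable g → (∃ M : ℝ, ∀ x, |g x| ≤ M) →
      Tendsto (fun n => ∫ x, φ (f n x) * g x ∂μ) atTop (nhds (∫ x, h x * g x ∂μ)))
    (t c : ℝ) (hc : ∀ s, φ t + c * (s - t) ≤ φ s) :
    ∀ᵐ x ∂μ, φ t + c * (flim x - t) ≤ h x := by
  -- key integral inequality on finite measure sets
  have key : ∀ A : Set X, MeasurableSet A → μ A < ⊤ →
      ∫ x in A, (φ t + c * (flim x - t)) ∂μ ≤ ∫ x in A, h x ∂μ := by
    intro A hA hμA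
    set g : X → ℝ := A.indicator (fun _ => 1) with hg
    have hgmeas : Measurable g := measurable_const.indicator hA
    have hgbdd : ∃ M : ℝ, ∀ x, |g x| ≤ M := by
      refine ⟨1, fun x => ?_⟩
      by_cases hx : x ∈ A <;> simp [hg, Set.indicator_of_mem, Set.indicator_of_notMem, hx]
    have hmul : ∀ F : X → ℝ, (fun x => F x * g x) = A.indicator F := by
      intro F
      funext x
      by_cases hx : x ∈ A <;>
        simp [hg, Set.indicator_of_mem, Set.indicator_of_notMem, hx]
    have hint : ∀ F : X → ℝ, ∫ x, F x * g x ∂μ = ∫ x in A, F x ∂μ := by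
      intro F
      rw [hmul F, integral_indicator hA]
    have h1 : Tendsto (fun n => ∫ x in A, f n x ∂μ) atTop (nhds (∫ x in A, flim x ∂μ)) := by
      have := hweak g hgmeas hgbdd
      simpa only [hint] using this
    have h2 : Tendsto (fun n => ∫ x in A, φ (f n x) ∂μ) atTop (nhds (∫ x in A, h x ∂μ)) := by
      have := hweakφ g hgmeas hgbdd
      simpa only [hint] using this
    have comp : ∀ u : X → ℝ, Integrable u μ →
        ∫ x in A, (φ t + c * (u x - t)) ∂μ
          = (φ t - c * t) * (μ A).toReal + c * ∫ x in A, u x ∂μ := by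
      intro u hu
      have : (fun x => φ t + c * (u x - t)) = fun x => (φ t - c * t) + c * u x := by
        funext x; ring
      rw [this, integral_add ((integrableOn_const_iff (C := φ t - c * t)).mpr (Or.inr hμA))
        (hu.integrableOn.const_mul c), integral_const, integral_const_mul]
      simp [Measure.restrict_apply_univ, mul_comm, Measure.real]
    have h3 : Tendsto (fun n => (φ t - c * t) * (μ A).toReal + c * ∫ x in A, f n x ∂μ)
        atTop (nhds ((φ t - c * t) * (μ A).toReal + c * ∫ x in A, flim x ∂μ)) :=
      tendsto_const_nhds.add (h1.const_mul c)
    have hle : ∀ n, (φ t - c * t) * (μ A).toReal + c * ∫ x in A, f n x ∂μ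
        ≤ ∫ x in A, φ (f n x) ∂μ := by
      intro n
      rw [← comp (f n) (hf n)]
      refine setIntegral_mono_on ?_ (hφf n).integrableOn hA fun x _ => hc (f n x)
      exact ((integrableOn_const_iff).mpr (Or.inr hμA)).add (((hf n).integrableOn.sub
        ((integrableOn_const_iff).mpr (Or.inr hμA))).const_mul c)
    have := le_of_tendsto_of_tendsto' h3 h2 hle
    rwa [comp flim hflim]
  -- go from set integrals to a.e.
  have := ae_nonneg_of_forall_setIntegral_nonneg_of_sigmaFinite (μ := μ)
    (f := fun x => h x - (φ t + c * (flim x - t))) ?_ ?_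
  · filter_upwards [this] with x hx
    simpa using hx
  · intro s hs hμs
    exact hh.integrableOn.sub (((integrableOn_const_iff).mpr (Or.inr hμs)).add
      ((hflim.integrableOn.sub ((integrableOn_const_iff).mpr (Or.inr hμs))).const_mul c))
  · intro s hs hμs
    have hint2 : IntegrableOn (fun x => φ t + c * (flim x - t)) s μ :=
      ((integrableOn_const_iff).mpr (Or.inr hμs)).add
        ((hflim.integrableOn.sub ((integrableOn_const_iff).mpr (Or.inr hμs))).const_mul c)
    rw [show (fun x => h x - (φ t + c * (flim x - t)))
        = fun x => h x - (fun y => φ t + c * (flim y - t)) x from rfl,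
      integral_sub hh.integrableOn hint2, sub_nonneg]
    exact key s hs hμs

/-- Lower semicontinuity of convex composition under weak L¹ convergence:
if `f_n ⇀ f` and `φ(f_n) ⇀ h` weakly in `L¹` (tested against all bounded measurable
functions) with `φ` convex, then `φ(f) ≤ h` almost everywhere. -/
theorem convex_weak_limit_ae_le
    {X : Type*} [MeasurableSpace X] (μ : Measure X) [SigmaFinite μ]
    (φ : ℝ → ℝ) (hφ : ConvexOn ℝ Set.univ φ)
    (f : ℕ → X → ℝ) (flim h : X → ℝ)
    (hf : ∀ n, Integrable (f n) μ) (hflim : Integrable flim μ) (hh : Integrable h μ)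
    (hφf : ∀ n, Integrable (fun x => φ (f n x)) μ)
    (hweak : ∀ g : X → ℝ, Measurable g → (∃ M : ℝ, ∀ x, |g x| ≤ M) →
      Tendsto (fun n => ∫ x, f n x * g x ∂μ) atTop (nhds (∫ x, flim x * g x ∂μ)))
    (hweakφ : ∀ g : X → ℝ, Measurable g → (∃ M : ℝ, ∀ x, |g x| ≤ M) →
      Tendsto (fun n => ∫ x, φ (f n x) * g x ∂μ) atTop (nhds (∫ x, h x * g x ∂μ))) :
    ∀ᵐ x ∂μ, φ (flim x) ≤ h x := by
  classical
  choose c hc1 hc2 hc3 using fun t => exists_subgradient hφ t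
  have key : ∀ᵐ x ∂μ, ∀ q : ℚ, φ (q : ℝ) + c q * (flim x - q) ≤ h x := by
    rw [ae_all_iff]
    intro q
    exact ae_affine_le μ hf hflim hh hφf hweak hweakφ (q : ℝ) (c (q : ℝ)) (hc1 (q : ℝ))
  filter_upwards [key] with x hx
  set s : ℝ := flim x with hs
  set L : ℝ := (φ s - φ (s - 1)) / (s - (s - 1)) with hL
  set U : ℝ := (φ (s + 2) - φ (s + 1)) / (s + 2 - (s + 1)) with hU
  have hLcs : L ≤ c s := hc2 s
  have hmid : (φ (s + 1) - φ s) / (s + 1 - s) ≤ U :=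
    slope_mono_gen hφ (by linarith) (by linarith) (by linarith) (by linarith)
  have hcsU : c s ≤ U := le_trans (hc3 s) hmid
  have hD0 : 0 ≤ U - L := by linarith
  refine le_of_forall_pos_le_add fun ε hε => ?_
  have hδ : (0 : ℝ) < min 1 (ε / (U - L + 1)) := lt_min one_pos (by positivity)
  obtain ⟨q, hq1, hq2⟩ := exists_rat_btwn (show s < s + min 1 (ε / (U - L + 1)) by linarith)
  have hq3 : (q : ℝ) < s + 1 := lt_of_lt_of_le hq2 (by simp [min_le_left])
  have hqs : (0 : ℝ) ≤ (q : ℝ) - s := by linarith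
  have hLcq : L ≤ c q :=
    le_trans (slope_mono_gen hφ (by linarith) (by linarith) (by linarith) (le_of_lt hq1))
      (hc2 (q : ℝ))
  have hcqU : c (q : ℝ) ≤ U :=
    le_trans (hc3 (q : ℝ))
      (slope_mono_gen hφ (by linarith) (by linarith) (by linarith) (by linarith))
  -- chain
  have h1 : φ (q : ℝ) + c q * (s - q) ≤ h x := hx q
  have h2 : φ s + c s * ((q : ℝ) - s) ≤ φ (q : ℝ) := hc1 s (q : ℝ)
  have h3 : -((U - L) * ((q : ℝ) - s)) ≤ (c s - c q) * ((q : ℝ) - s) := by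
    have := mul_nonneg (show (0 : ℝ) ≤ c s - c q + (U - L) by linarith) hqs
    nlinarith [this]
  have h4 : (q : ℝ) - s ≤ ε / (U - L + 1) := by
    have := min_le_right (1 : ℝ) (ε / (U - L + 1))
    linarith
  have h5 : (U - L) * ((q : ℝ) - s) ≤ ε := by
    have e1 : (U - L) * ((q : ℝ) - s) ≤ (U - L) * (ε / (U - L + 1)) :=
      mul_le_mul_of_nonneg_left h4 hD0
    have e2 : (U - L) * (ε / (U - L + 1)) ≤ ε := by
      rw [mul_div_assoc', div_le_iff₀ (show (0 : ℝ) < U - L + 1 by linarith)]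
      nlinarith
    linarith
  have hexp : (c s - c q) * ((q : ℝ) - s) = c s * ((q : ℝ) - s) + c q * (s - q) := by ring
  linarith [h1, h2, h3, h5, hexp.ge, hexp.le]
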